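/- Strong data-processing inequality for total variation: for a Markov kernel Q from X to Z and probability measures P_0, P_1 on X with pushforwards M_0, M_1 on Z (M_i(A) = ∫ Q(A|x) dP_i(x)), it holds that d_TV(M_0, M_1) ≤ α_TV(Q) · d_TV(P_0, P_1), where α_TV(Q) = sup_{x,x'} d_TV(Q(·|x), Q(·|x')) is the Dobrushin coefficient. -/

import Mathlib

open MeasureTheory ProbabilityTheory ENNReal

/-- Total variation distance between two measures. -/
noncomputable def tvDist {Z : Type*} [MeasurableSpace Z]
    (P Q : Measure Z) : ℝ :=
  ⨆ A : {A : Set Z // MeasurableSet A}, |(P A.1).toReal - (Q A.1).toReal|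

/-- Dobrushin coefficient of a kernel. -/
noncomputable def dobrushin {X Z : Type*} [MeasurableSpace X] [MeasurableSpace Z]
    (Q : Kernel X Z) : ℝ :=
  ⨆ p : X × X, tvDist (Q p.1) (Q p.2)

section aux

variable {Z : Type*} [MeasurableSpace Z]

lemma tvDist_nonneg (P Q : Measure Z) : 0 ≤ tvDist P Q :=
  Real.iSup_nonneg fun _ => abs_nonneg _

lemma tvDist_term_le_one (P Q : Measure Z) [IsProbabilityMeasure P] [IsProbabilityMeasure Q]
    (A : Set Z) : |(P A).toReal - (Q A).toReal| ≤ 1 := by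
  have h1 : (P A).toReal ≤ 1 := by
    simpa using ENNReal.toReal_mono (by simp) (prob_le_one (μ := P) (s := A))
  have h2 : (Q A).toReal ≤ 1 := by
    simpa using ENNReal.toReal_mono (by simp) (prob_le_one (μ := Q) (s := A))
  have h3 : (0:ℝ) ≤ (P A).toReal := ENNReal.toReal_nonneg
  have h4 : (0:ℝ) ≤ (Q A).toReal := ENNReal.toReal_nonneg
  rw [abs_sub_le_iff]; constructor <;> linarith

lemma tvDist_bddAbove (P Q : Measure Z) [IsProbabilityMeasure P] [IsProbabilityMeasure Q] :
    BddAbove (Set.range fun A : {A : Set Z // MeasurableSet A} =>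
      |(P A.1).toReal - (Q A.1).toReal|) :=
  ⟨1, by rintro x ⟨A, rfl⟩; exact tvDist_term_le_one P Q A.1⟩

lemma abs_le_tvDist (P Q : Measure Z) [IsProbabilityMeasure P] [IsProbabilityMeasure Q]
    {A : Set Z} (hA : MeasurableSet A) :
    |(P A).toReal - (Q A).toReal| ≤ tvDist P Q :=
  le_ciSup (tvDist_bddAbove P Q) ⟨A, hA⟩

lemma tvDist_le_one (P Q : Measure Z) [IsProbabilityMeasure P] [IsProbabilityMeasure Q] :
    tvDist P Q ≤ 1 :=
  Real.iSup_le (fun A => tvDist_term_le_one P Q A.1) zero_le_one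

lemma tvDist_comm (P Q : Measure Z) : tvDist P Q = tvDist Q P := by
  unfold tvDist
  congr 1; funext A; rw [abs_sub_comm]

end aux

section kern

variable {X Z : Type*} [MeasurableSpace X] [MeasurableSpace Z]

lemma dobrushin_nonneg (Q : Kernel X Z) : 0 ≤ dobrushin Q :=
  Real.iSup_nonneg fun p => tvDist_nonneg _ _

lemma tvDist_le_dobrushin (Q : Kernel X Z) [IsMarkovKernel Q] (x x' : X) :
    tvDist (Q x) (Q x') ≤ dobrushin Q :=
  le_ciSup (f := fun p : X × X => tvDist (Q p.1) (Q p.2))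
    ⟨1, by rintro r ⟨p, rfl⟩; exact tvDist_le_one _ _⟩ (x, x')

lemma key_ineq (Q : Kernel X Z) [IsMarkovKernel Q]
    (P₀ P₁ : Measure X) [IsProbabilityMeasure P₀] [IsProbabilityMeasure P₁]
    {A : Set Z} (hA : MeasurableSet A) :
    ((P₀.bind Q) A).toReal - ((P₁.bind Q) A).toReal ≤ dobrushin Q * tvDist P₀ P₁ := by
  classical
  have hX : Nonempty X := by
    by_contra h
    have h0 : P₀ Set.univ = 1 := measure_univ
    rw [Set.univ_eq_empty_iff.2 (not_nonempty_iff.1 h)] at h0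
    simp at h0
  -- abbreviations
  set α : ℝ := dobrushin Q with hαdef
  set tv : ℝ := tvDist P₀ P₁ with htvdef
  have hα0 : 0 ≤ α := dobrushin_nonneg Q
  have htv0 : 0 ≤ tv := tvDist_nonneg P₀ P₁
  set g : X → ℝ≥0∞ := fun x => Q x A with hgdef
  have hg_meas : Measurable g := Q.measurable_coe hA
  have hg_le_one : ∀ x, g x ≤ 1 := fun x => prob_le_one
  have hg_ne_top : ∀ x, g x ≠ ⊤ := fun x => (lt_of_le_of_lt (hg_le_one x) (by simp)).ne
  set gr : X → ℝ := fun x => (g x).toReal with hgrdef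
  have hgr_meas : Measurable gr := hg_meas.ennreal_toReal
  have hgr_nonneg : ∀ x, 0 ≤ gr x := fun x => ENNReal.toReal_nonneg
  have hbdd_below : BddBelow (Set.range gr) := ⟨0, by rintro r ⟨x, rfl⟩; exact hgr_nonneg x⟩
  set a : ℝ := ⨅ x, gr x with hadef
  have ha_le : ∀ x, a ≤ gr x := fun x => ciInf_le hbdd_below x
  have ha0 : 0 ≤ a := le_ciInf hgr_nonneg
  have hosc : ∀ x x', gr x - gr x' ≤ α := by
    intro x x'
    calc gr x - gr x' ≤ |(Q x A).toReal - (Q x' A).toReal| := le_abs_self _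
      _ ≤ tvDist (Q x) (Q x') := abs_le_tvDist _ _ hA
      _ ≤ α := tvDist_le_dobrushin Q x x'
  have hgr_le : ∀ x, gr x ≤ a + α := by
    intro x
    have : gr x - α ≤ a := le_ciInf fun x' => by linarith [hosc x x']
    linarith
  set h : X → ℝ := fun x => gr x - a with hhdef
  have hh_meas : Measurable h := hgr_meas.sub measurable_const
  have hh_nonneg : ∀ x, 0 ≤ h x := fun x => by simp only [hhdef]; linarith [ha_le x]
  have hh_le : ∀ x, h x ≤ α := fun x => by simp only [hhdef]; linarith [hgr_le x]
  -- pointwise set bound from tvDist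
  have hset : ∀ S : Set X, MeasurableSet S → P₀ S ≤ P₁ S + ENNReal.ofReal tv := by
    intro S hS
    have h1 : (P₀ S).toReal - (P₁ S).toReal ≤ tv :=
      le_trans (le_abs_self _) (abs_le_tvDist P₀ P₁ hS)
    calc P₀ S = ENNReal.ofReal ((P₀ S).toReal) := (ENNReal.ofReal_toReal (measure_ne_top _ _)).symm
      _ ≤ ENNReal.ofReal ((P₁ S).toReal + tv) := ENNReal.ofReal_le_ofReal (by linarith)
      _ = ENNReal.ofReal ((P₁ S).toReal) + ENNReal.ofReal tv :=
          ENNReal.ofReal_add ENNReal.toReal_nonneg htv0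
      _ = P₁ S + ENNReal.ofReal tv := by rw [ENNReal.ofReal_toReal (measure_ne_top _ _)]
  -- ofReal h = g - ofReal a
  have hofReal_h : ∀ x, ENNReal.ofReal (h x) = g x - ENNReal.ofReal a := by
    intro x
    rw [hhdef]
    simp only
    rw [ENNReal.ofReal_sub _ ha0, ENNReal.ofReal_toReal (hg_ne_top x)]
  have hconst_le : ∀ x, ENNReal.ofReal a ≤ g x := by
    intro x
    rw [← ENNReal.ofReal_toReal (hg_ne_top x)]
    exact ENNReal.ofReal_le_ofReal (ha_le x)
  -- lintegral of ofReal h for any probability measure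
  have hlintg : ∀ (P : Measure X), IsProbabilityMeasure P →
      ∫⁻ x, ENNReal.ofReal (h x) ∂P = (P.bind Q) A - ENNReal.ofReal a := by
    intro P hP
    have : ∫⁻ x, ENNReal.ofReal (h x) ∂P = ∫⁻ x, g x - ENNReal.ofReal a ∂P := by
      congr 1; funext x; exact hofReal_h x
    rw [this, lintegral_sub measurable_const (by simp [lintegral_const])
        (Filter.Eventually.of_forall hconst_le), lintegral_const, measure_univ, mul_one,
        Measure.bind_apply hA (Kernel.measurable Q).aemeasurable]
  -- layer cake
  have hlayer : ∀ (P : Measure X), ∫⁻ x, ENNReal.ofReal (h x) ∂P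
      = ∫⁻ t in Set.Ioi (0:ℝ), P {x | t < h x} := fun P =>
    lintegral_eq_lintegral_meas_lt P (Filter.Eventually.of_forall hh_nonneg)
      hh_meas.aemeasurable
  set L₀ : ℝ≥0∞ := ∫⁻ x, ENNReal.ofReal (h x) ∂P₀ with hL₀
  set L₁ : ℝ≥0∞ := ∫⁻ x, ENNReal.ofReal (h x) ∂P₁ with hL₁
  -- main comparison
  have hmain : L₀ ≤ L₁ + ENNReal.ofReal (α * tv) := by
    rw [hL₀, hL₁, hlayer P₀, hlayer P₁]
    have hpt : ∀ t ∈ Set.Ioi (0:ℝ), P₀ {x | t < h x} ≤ P₁ {x | t < h x}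
        + (Set.Ioc (0:ℝ) α).indicator (fun _ => ENNReal.ofReal tv) t := by
      intro t ht
      by_cases htα : t ≤ α
      · rw [Set.indicator_of_mem (Set.mem_Ioc.2 ⟨Set.mem_Ioi.1 ht, htα⟩)]
        exact hset _ (measurableSet_lt measurable_const hh_meas)
      · have : {x | t < h x} = ∅ := by
          ext x; simp only [Set.mem_setOf_eq, Set.mem_empty_iff_false, iff_false, not_lt]
          linarith [hh_le x]
        rw [this, measure_empty]
        exact zero_le
    calc ∫⁻ t in Set.Ioi (0:ℝ), P₀ {x | t < h x}
        ≤ ∫⁻ t in Set.Ioi (0:ℝ), (P₁ {x | t < h x}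
            + (Set.Ioc (0:ℝ) α).indicator (fun _ => ENNReal.ofReal tv) t) :=
          setLIntegral_mono' measurableSet_Ioi hpt
      _ = (∫⁻ t in Set.Ioi (0:ℝ), P₁ {x | t < h x})
            + ∫⁻ t in Set.Ioi (0:ℝ), (Set.Ioc (0:ℝ) α).indicator
              (fun _ => ENNReal.ofReal tv) t :=
          lintegral_add_right _ (measurable_const.indicator measurableSet_Ioc)
      _ ≤ (∫⁻ t in Set.Ioi (0:ℝ), P₁ {x | t < h x}) + ENNReal.ofReal (α * tv) := by
          gcongr
          rw [lintegral_indicator measurableSet_Ioc, setLIntegral_const,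
            Measure.restrict_apply measurableSet_Ioc,
            Set.inter_eq_self_of_subset_left Set.Ioc_subset_Ioi_self,
            Real.volume_Ioc, mul_comm, ← ENNReal.ofReal_mul (by linarith)]
          exact ENNReal.ofReal_le_ofReal (by nlinarith)
  -- finiteness and unfolding
  have hbind_le_one : ∀ (P : Measure X), IsProbabilityMeasure P → (P.bind Q) A ≤ 1 := by
    intro P hP
    rw [Measure.bind_apply hA (Kernel.measurable Q).aemeasurable]
    calc ∫⁻ x, Q x A ∂P ≤ ∫⁻ _, 1 ∂P := lintegral_mono fun x => hg_le_one x
      _ = 1 := by simp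
  have hc_le : ∀ (P : Measure X), IsProbabilityMeasure P →
      ENNReal.ofReal a ≤ (P.bind Q) A := by
    intro P hP
    rw [Measure.bind_apply hA (Kernel.measurable Q).aemeasurable]
    calc ENNReal.ofReal a = ∫⁻ _, ENNReal.ofReal a ∂P := by simp
      _ ≤ ∫⁻ x, Q x A ∂P := lintegral_mono hconst_le
  have hM₀ne : (P₀.bind Q) A ≠ ⊤ := (lt_of_le_of_lt (hbind_le_one P₀ inferInstance) (by simp)).ne
  have hM₁ne : (P₁.bind Q) A ≠ ⊤ := (lt_of_le_of_lt (hbind_le_one P₁ inferInstance) (by simp)).ne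
  have hL₀eq : L₀.toReal = ((P₀.bind Q) A).toReal - a := by
    rw [hL₀, hlintg P₀ inferInstance, ENNReal.toReal_sub_of_le (hc_le P₀ inferInstance) hM₀ne,
      ENNReal.toReal_ofReal ha0]
  have hL₁eq : L₁.toReal = ((P₁.bind Q) A).toReal - a := by
    rw [hL₁, hlintg P₁ inferInstance, ENNReal.toReal_sub_of_le (hc_le P₁ inferInstance) hM₁ne,
      ENNReal.toReal_ofReal ha0]
  have hL₁ne : L₁ ≠ ⊤ := by
    rw [hL₁, hlintg P₁ inferInstance]
    exact (lt_of_le_of_lt (le_trans tsub_le_self (hbind_le_one P₁ inferInstance)) (by simp)).ne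
  have hfinal : L₀.toReal ≤ L₁.toReal + α * tv := by
    calc L₀.toReal ≤ (L₁ + ENNReal.ofReal (α * tv)).toReal :=
        ENNReal.toReal_mono (by finiteness) hmain
      _ = L₁.toReal + α * tv := by
        rw [ENNReal.toReal_add hL₁ne ENNReal.ofReal_ne_top,
          ENNReal.toReal_ofReal (by positivity)]
  rw [hL₀eq, hL₁eq] at hfinal
  linarith

end kern

/-- Strong data-processing inequality for total variation. -/
theorem stmt2 {X Z : Type*} [MeasurableSpace X] [MeasurableSpace Z]
    (Q : Kernel X Z) [IsMarkovKernel Q]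
    (P₀ P₁ : Measure X) [IsProbabilityMeasure P₀] [IsProbabilityMeasure P₁] :
    tvDist (P₀.bind Q) (P₁.bind Q) ≤ dobrushin Q * tvDist P₀ P₁ := by
  apply Real.iSup_le _ (mul_nonneg (dobrushin_nonneg Q) (tvDist_nonneg P₀ P₁))
  rintro ⟨A, hA⟩
  rw [abs_sub_le_iff]
  constructor
  · exact key_ineq Q P₀ P₁ hA
  · have := key_ineq Q P₁ P₀ hA
    rwa [tvDist_comm P₁ P₀] at this
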